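/- Let b > 0 and let g be a non-negative decreasing convex function on [0, b] with g(0) ≥ 1/4, g(b) = 0, and |g(z) − g(w)| ≤ |z − w|/2 for all z, w ∈ [0, b]. Set M₀ = 1 + max{ m ∈ {0,…,⌊b⌋} : g(m) ≥ 1/4 } and assume M₀ ≤ b. Then Σ_{m=0}^{⌊b⌋} ⌊g(m)+3/4⌋ ≥ ∫₀^b g(z) dz − (b − 3M₀)/8. -/

import Mathlib

open intervalIntegral

lemma trap_bound {g : ℝ → ℝ} {b : ℝ}
    (hconv : ConvexOn ℝ (Set.Icc (0:ℝ) b) g)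
    (hcont : ContinuousOn g (Set.Icc (0:ℝ) b))
    {c d : ℝ} (h0c : 0 ≤ c) (hcd : c ≤ d) (hdb : d ≤ b) :
    ∫ z in c..d, g z ≤ (d - c) * (g c + g d) / 2 := by
  rcases eq_or_lt_of_le hcd with rfl | hlt
  · simp
  have hsub : Set.Icc c d ⊆ Set.Icc (0:ℝ) b := Set.Icc_subset_Icc h0c hdb
  have hdc : (0:ℝ) < d - c := by linarith
  set A := (g d - g c) / (d - c) with hA
  have hline : ∀ z ∈ Set.Icc c d, g z ≤ g c + A * (z - c) := by
    intro z hz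
    obtain ⟨hz1, hz2⟩ := hz
    have hc : c ∈ Set.Icc (0:ℝ) b := ⟨h0c, le_trans hcd hdb⟩
    have hd : d ∈ Set.Icc (0:ℝ) b := ⟨le_trans h0c hcd, hdb⟩
    have h1 : (0:ℝ) ≤ (d - z)/(d-c) := div_nonneg (by linarith) (by linarith)
    have h2 : (0:ℝ) ≤ (z - c)/(d-c) := div_nonneg (by linarith) (by linarith)
    have h3 : (d - z)/(d-c) + (z - c)/(d-c) = 1 := by field_simp; ring
    have h4 := hconv.2 hc hd h1 h2 h3
    have h5 : ((d - z)/(d-c)) • c + ((z - c)/(d-c)) • d = z := by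
      simp only [smul_eq_mul]; field_simp; ring
    rw [h5] at h4
    simp only [smul_eq_mul] at h4
    calc g z ≤ (d-z)/(d-c) * g c + (z-c)/(d-c) * g d := h4
    _ = g c + A * (z - c) := by rw [hA]; field_simp; ring
  have hcu : ContinuousOn g (Set.uIcc c d) := by
    rw [Set.uIcc_of_le hcd]; exact hcont.mono hsub
  have hInt1 : IntervalIntegrable g MeasureTheory.volume c d := hcu.intervalIntegrable
  have hInt2 : IntervalIntegrable (fun z => g c + A * (z - c)) MeasureTheory.volume c d := by
    apply Continuous.intervalIntegrable; continuity
  have hmono := intervalIntegral.integral_mono_on hcd hInt1 hInt2 hline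
  have hlin_int : (∫ z in c..d, (g c + A * (z - c))) = (d - c) * (g c + g d) / 2 := by
    have h6 : (fun z : ℝ => g c + A * (z - c)) = fun z => (g c - A*c) + A * z := by
      funext z; ring
    rw [h6, intervalIntegral.integral_add intervalIntegrable_const
      (by apply Continuous.intervalIntegrable; continuity),
      intervalIntegral.integral_const, intervalIntegral.integral_const_mul, integral_id,
      smul_eq_mul]
    rw [hA]
    field_simp
    ring
  linarith [hmono, hlin_int.le, hlin_int.ge]

set_option maxHeartbeats 1000000 in
theorem stmt9 (b : ℝ) (hb : 0 < b) (g : ℝ → ℝ)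
    (hnonneg : ∀ z ∈ Set.Icc (0 : ℝ) b, 0 ≤ g z)
    (hanti : AntitoneOn g (Set.Icc (0 : ℝ) b))
    (hconv : ConvexOn ℝ (Set.Icc (0 : ℝ) b) g)
    (hg0 : 1 / 4 ≤ g 0) (hgb : g b = 0)
    (hlip : ∀ z ∈ Set.Icc (0 : ℝ) b, ∀ w ∈ Set.Icc (0 : ℝ) b,
      |g z - g w| ≤ |z - w| / 2)
    (M₀ : ℤ)
    (hM₀max : 0 ≤ M₀ - 1 ∧ M₀ - 1 ≤ ⌊b⌋ ∧ 1 / 4 ≤ g ((M₀ : ℝ) - 1) ∧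
      ∀ m : ℤ, M₀ - 1 < m → m ≤ ⌊b⌋ → g (m : ℝ) < 1 / 4)
    (hM₀b : (M₀ : ℝ) ≤ b) :
    (∫ z in (0 : ℝ)..b, g z) - (b - 3 * (M₀ : ℝ)) / 8 ≤
      ∑ m ∈ Finset.Icc 0 ⌊b⌋, (⌊g (m : ℝ) + 3 / 4⌋ : ℝ) := by
  obtain ⟨hM1, hM2, hM3, hM4⟩ := hM₀max
  have hM₀1 : (1:ℤ) ≤ M₀ := by omega
  have hM₀1R : (1:ℝ) ≤ (M₀:ℝ) := by exact_mod_cast hM₀1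
  have hM₀0R : (0:ℝ) ≤ (M₀:ℝ) := by linarith
  have hM₀floor : M₀ ≤ ⌊b⌋ := Int.le_floor.mpr hM₀b
  have hfbb : ((⌊b⌋:ℝ)) ≤ b := Int.floor_le b
  have hgM₀ : g (M₀:ℝ) < 1/4 := hM4 M₀ (by omega) hM₀floor
  have hcont : ContinuousOn g (Set.Icc (0:ℝ) b) := by
    have hL : LipschitzOnWith (1/2 : NNReal) g (Set.Icc (0:ℝ) b) := by
      rw [lipschitzOnWith_iff_dist_le_mul]
      intro x hx y hy
      rw [Real.dist_eq, Real.dist_eq]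
      have := hlip x hx y hy
      push_cast
      linarith
    exact hL.continuousOn
  have hInt : ∀ c d : ℝ, c ∈ Set.Icc (0:ℝ) b → d ∈ Set.Icc (0:ℝ) b →
      IntervalIntegrable g MeasureTheory.volume c d := by
    intro c d hc hd
    apply ContinuousOn.intervalIntegrable
    exact hcont.mono (Set.uIcc_subset_Icc hc hd)
  have h0b : (0:ℝ) ∈ Set.Icc (0:ℝ) b := ⟨le_refl _, hb.le⟩
  have hbb : b ∈ Set.Icc (0:ℝ) b := ⟨hb.le, le_refl _⟩
  have hMb : (M₀:ℝ) ∈ Set.Icc (0:ℝ) b := ⟨hM₀0R, hM₀b⟩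
  have hgM₀0 : 0 ≤ g (M₀:ℝ) := hnonneg _ hMb
  -- membership of integers m ∈ [0, M₀ - 1]
  have hmb : ∀ m : ℤ, 0 ≤ m → m ≤ M₀ - 1 → (m:ℝ) ∈ Set.Icc (0:ℝ) b := by
    intro m h0 h1
    refine ⟨by exact_mod_cast h0, ?_⟩
    have hm1 : (m:ℝ) ≤ (M₀:ℝ) - 1 := by
      have : ((m:ℝ)) ≤ ((M₀ - 1 : ℤ) : ℝ) := by exact_mod_cast h1
      push_cast at this; linarith
    linarith
  have hgm : ∀ m : ℤ, 0 ≤ m → m ≤ M₀ - 1 → 1/4 ≤ g (m:ℝ) := by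
    intro m h0 h1
    have hM1b : ((M₀:ℝ) - 1) ∈ Set.Icc (0:ℝ) b := by
      constructor
      · linarith
      · linarith
    have hle : (m:ℝ) ≤ (M₀:ℝ) - 1 := by
      have : ((m:ℝ)) ≤ ((M₀ - 1 : ℤ) : ℝ) := by exact_mod_cast h1
      push_cast at this; linarith
    have := hanti (hmb m h0 h1) hM1b hle
    linarith
  -- K
  set K : ℤ := ⌊g 0 + 3/4⌋ with hKdef
  have hK1 : 1 ≤ K := by
    rw [hKdef, Int.le_floor]; push_cast; linarith
  have hg0K : g 0 < (K:ℝ) + 1/4 := by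
    have := Int.lt_floor_add_one (g 0 + 3/4)
    rw [← hKdef] at this; linarith
  have hg0K' : (K:ℝ) - 3/4 ≤ g 0 := by
    have := Int.floor_le (g 0 + 3/4)
    rw [← hKdef] at this; linarith
  -- crossing points
  have hexu : ∀ k : ℤ, 1 ≤ k → k ≤ K → ∃ x, x ∈ Set.Icc (0:ℝ) (M₀:ℝ) ∧ g x = (k:ℝ) - 3/4 := by
    intro k hk1 hkK
    have hmem : ((k:ℝ) - 3/4) ∈ Set.Icc (g (M₀:ℝ)) (g 0) := by
      constructor
      · have : (1:ℝ) ≤ (k:ℝ) := by exact_mod_cast hk1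
        linarith
      · have : (k:ℝ) ≤ (K:ℝ) := by exact_mod_cast hkK
        linarith
    obtain ⟨x, hx, hgx⟩ :=
      intermediate_value_Icc' hM₀0R (hcont.mono (Set.Icc_subset_Icc le_rfl hM₀b)) hmem
    exact ⟨x, hx, hgx⟩
  obtain ⟨u, huI, hug⟩ : ∃ u : ℤ → ℝ, (∀ k, 1 ≤ k → k ≤ K → u k ∈ Set.Icc (0:ℝ) (M₀:ℝ)) ∧
      (∀ k, 1 ≤ k → k ≤ K → g (u k) = (k:ℝ) - 3/4) := by
    refine ⟨fun k => if h : 1 ≤ k ∧ k ≤ K then (hexu k h.1 h.2).choose else 0, ?_, ?_⟩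
    · intro k h1 h2; simp only [dif_pos (And.intro h1 h2)]
      exact (hexu k h1 h2).choose_spec.1
    · intro k h1 h2; simp only [dif_pos (And.intro h1 h2)]
      exact (hexu k h1 h2).choose_spec.2
  have hub : ∀ k, 1 ≤ k → k ≤ K → u k ∈ Set.Icc (0:ℝ) b := by
    intro k h1 h2
    exact Set.Icc_subset_Icc le_rfl hM₀b (huI k h1 h2)
  have hu_anti : ∀ j k : ℤ, 1 ≤ j → j < k → k ≤ K → u k < u j := by
    intro j k h1 hjk h2
    by_contra h
    push_neg at h
    have h5 := hanti (hub j h1 (by omega)) (hub k (by omega) h2) h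
    rw [hug j h1 (by omega), hug k (by omega) h2] at h5
    have h6 : (k:ℝ) ≤ (j:ℝ) := by linarith
    have : k ≤ j := by exact_mod_cast h6
    omega
  -- indices
  set n : ℕ := K.toNat with hndef
  have hnK : (n:ℤ) = K := Int.toNat_of_nonneg (by omega)
  have hn1 : 1 ≤ n := by omega
  set p : ℕ := n - 1 with hpdef
  have hnp : n = p + 1 := by omega
  have hnc : ((p:ℤ) + 1) = K := by omega
  -- PART 1: integral bound on [0, M₀]
  have hIntBound : (∫ z in (0:ℝ)..(M₀:ℝ), g z)
      ≤ (M₀:ℝ)/4 + (u 1)/2 + ∑ i ∈ Finset.range p, u (K - i) := by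
    set a : ℕ → ℝ := fun i => if i = 0 then 0 else if (i:ℤ) ≤ K then u (K + 1 - i) else (M₀:ℝ)
      with hadef
    have ha0 : a 0 = 0 := by simp [hadef]
    have hau : ∀ i : ℕ, 1 ≤ i → (i:ℤ) ≤ K → a i = u (K + 1 - i) := by
      intro i h1 h2
      simp only [hadef]
      rw [if_neg (by omega), if_pos h2]
    have haM : ∀ i : ℕ, K < (i:ℤ) → a i = (M₀:ℝ) := by
      intro i h2
      simp only [hadef]
      rw [if_neg (by omega), if_neg (by omega)]
    have hbound : ∀ i : ℕ, 1 ≤ i → (i:ℤ) ≤ K → u (K + 1 - i) ∈ Set.Icc (0:ℝ) (M₀:ℝ) :=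
      fun i h1 h2 => huI _ (by omega) (by omega)
    have ha_memM : ∀ i, a i ∈ Set.Icc (0:ℝ) (M₀:ℝ) := by
      intro i
      rcases Nat.eq_zero_or_pos i with rfl | hi
      · rw [ha0]; exact ⟨le_refl _, hM₀0R⟩
      rcases le_or_gt (i:ℤ) K with h | h
      · rw [hau i hi h]; exact hbound i hi h
      · rw [haM i h]; exact ⟨hM₀0R, le_refl _⟩
    have ha_mem : ∀ i, a i ∈ Set.Icc (0:ℝ) b := fun i =>
      Set.Icc_subset_Icc le_rfl hM₀b (ha_memM i)
    have ha_mono : ∀ i : ℕ, a i ≤ a (i + 1) := by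
      intro i
      rcases Nat.eq_zero_or_pos i with rfl | hi
      · rw [ha0]; exact (ha_memM 1).1
      rcases le_or_gt ((i:ℤ)+1) K with h | h
      · rw [hau i hi (by omega), hau (i+1) (by omega) (by push_cast; omega)]
        have := hu_anti (K + 1 - (i+1:ℕ)) (K + 1 - (i:ℕ)) (by push_cast; omega)
          (by push_cast; omega) (by omega)
        push_cast at this ⊢
        linarith
      rcases le_or_gt (i:ℤ) K with h' | h'
      · rw [hau i hi h', haM (i+1) (by push_cast; omega)]
        exact (hbound i hi h').2
      · rw [haM i h', haM (i+1) (by push_cast; omega)]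
    have hpart : ∑ i ∈ Finset.range (n+1), (∫ z in a i..a (i+1), g z)
        = ∫ z in (0:ℝ)..(M₀:ℝ), g z := by
      have := intervalIntegral.sum_integral_adjacent_intervals
        (a := a) (n := n+1) (f := g) (μ := MeasureTheory.volume)
        (fun k _ => hInt _ _ (ha_mem k) (ha_mem (k+1)))
      rw [this, ha0, haM (n+1) (by omega)]
    have hpiece : ∀ i : ℕ, i < n → (∫ z in a i..a (i+1), g z)
        ≤ (a (i+1) - a i) * ((K:ℝ) - i - 1/4) := by
      intro i hi
      have hgl : g (a i) ≤ (K:ℝ) - i + 1/4 := by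
        rcases Nat.eq_zero_or_pos i with rfl | hpos
        · rw [ha0]; push_cast; linarith
        · rw [hau i hpos (by omega), hug _ (by omega) (by omega)]
          push_cast; linarith
      have hgr : g (a (i+1)) = (K:ℝ) - i - 3/4 := by
        rw [hau (i+1) (by omega) (by push_cast; omega), hug _ (by omega) (by omega)]
        push_cast; ring
      have htr := trap_bound hconv hcont (ha_mem i).1 (ha_mono i) (ha_mem (i+1)).2
      have hd : 0 ≤ a (i+1) - a i := by linarith [ha_mono i]
      nlinarith [htr, hd, hgl, hgr]
    have hlast : (∫ z in a n..a (n+1), g z) ≤ ((M₀:ℝ) - u 1) / 4 := by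
      have han : a n = u 1 := by
        rw [hau n (by omega) (by omega)]
        congr 1; omega
      have htr := trap_bound hconv hcont (ha_mem n).1 (ha_mono n) (ha_mem (n+1)).2
      rw [haM (n+1) (by omega), han] at htr ⊢
      rw [hug 1 le_rfl hK1] at htr
      have hd : 0 ≤ (M₀:ℝ) - u 1 := by
        have := (huI 1 le_rfl hK1).2; linarith
      push_cast at htr
      nlinarith [htr, hd, hgM₀]
    set f : ℕ → ℝ := fun i => ((K:ℝ) - i - 1/4) * a i with hfdef
    have htel : ∑ i ∈ Finset.range n, (a (i+1) - a i) * ((K:ℝ) - i - 1/4)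
        = (f n - f 0) + ∑ i ∈ Finset.range n, a (i+1) := by
      rw [← Finset.sum_range_sub f, ← Finset.sum_add_distrib]
      apply Finset.sum_congr rfl
      intro i _
      simp only [hfdef]
      push_cast
      ring
    have hf0 : f 0 = 0 := by simp [hfdef, ha0]
    have hfn : f n = -(u 1)/4 := by
      have han : a n = u 1 := by
        rw [hau n (by omega) (by omega)]
        congr 1; omega
      simp only [hfdef, han]
      have hcast : ((n:ℝ)) = (K:ℝ) := by exact_mod_cast hnK
      rw [hcast]; ring
    have hsum_a : ∑ i ∈ Finset.range n, a (i+1) = u 1 + ∑ i ∈ Finset.range p, u (K - i) := by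
      have hterm : ∀ i : ℕ, i < n → a (i+1) = u (K - i) := by
        intro i hi
        rw [hau (i+1) (by omega) (by push_cast; omega)]
        congr 1; push_cast; ring
      rw [hnp, Finset.sum_range_succ]
      have h1 : a (p+1) = u 1 := by
        rw [hterm p (by omega)]; congr 1; omega
      rw [h1, add_comm]
      congr 1
      apply Finset.sum_congr rfl
      intro i hi
      exact hterm i (by simp at hi; omega)
    have hsplit : ∑ i ∈ Finset.range (n+1), (∫ z in a i..a (i+1), g z)
        = (∑ i ∈ Finset.range n, (∫ z in a i..a (i+1), g z)) + (∫ z in a n..a (n+1), g z) :=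
      Finset.sum_range_succ _ n
    have hmain : (∑ i ∈ Finset.range n, (∫ z in a i..a (i+1), g z))
        ≤ ∑ i ∈ Finset.range n, (a (i+1) - a i) * ((K:ℝ) - i - 1/4) :=
      Finset.sum_le_sum (fun i hi => hpiece i (by simpa using hi))
    rw [← hpart, hsplit]
    rw [htel, hf0, hfn] at hmain
    linarith [hmain, hlast, hsum_a]
  -- PART 2: counting bound
  have hCount : (M₀:ℝ) + ∑ i ∈ Finset.range p, u (K - i) ≤
      ∑ m ∈ Finset.Icc (0:ℤ) (M₀-1), (⌊g (m:ℝ) + 3/4⌋ : ℝ) := by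
    have key1 : ∀ m : ℤ, 0 ≤ m → m ≤ M₀ - 1 →
        (∑ i ∈ Finset.range p, if (m:ℝ) ≤ u (K - i) then (1:ℝ) else 0)
          ≤ (⌊g (m:ℝ) + 3/4⌋ : ℝ) - 1 := by
      intro m h0 h1
      have hF1 : 1 ≤ ⌊g (m:ℝ) + 3/4⌋ := by
        rw [Int.le_floor]
        have := hgm m h0 h1
        push_cast; linarith
      rw [Finset.sum_boole]
      have hcard : ((Finset.range p).filter (fun i : ℕ => (m:ℝ) ≤ u (K - i))).card
          ≤ (Finset.Icc (2:ℤ) ⌊g (m:ℝ) + 3/4⌋).card := by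
        refine Finset.card_le_card_of_injOn (fun i : ℕ => K - (i:ℤ)) ?_ ?_
        · intro i hi
          simp only [Finset.mem_coe, Finset.mem_filter, Finset.mem_range] at hi
          obtain ⟨hip, hmu⟩ := hi
          have hk2 : 2 ≤ K - (i:ℤ) := by omega
          have hkK : K - (i:ℤ) ≤ K := by omega
          have hgmu : g (u (K - i)) ≤ g (m:ℝ) := by
            apply hanti (hmb m h0 h1) ?_ hmu
            exact Set.Icc_subset_Icc le_rfl hM₀b (huI _ (by omega) hkK)
          rw [hug _ (by omega) hkK] at hgmu
          simp only [Finset.mem_coe, Finset.mem_Icc]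
          refine ⟨hk2, ?_⟩
          rw [Int.le_floor]
          push_cast at hgmu ⊢
          linarith
        · intro x _ y _ h
          simp only at h
          omega
      rw [Int.card_Icc] at hcard
      have h2 : (((⌊g (m:ℝ) + 3/4⌋ + 1 - 2).toNat : ℤ) : ℝ) = (⌊g (m:ℝ) + 3/4⌋ : ℝ) - 1 := by
        rw [Int.toNat_of_nonneg (by omega)]
        push_cast; ring
      calc (((Finset.range p).filter (fun i : ℕ => (m:ℝ) ≤ u (K - i))).card : ℝ)
          ≤ (((⌊g (m:ℝ) + 3/4⌋ + 1 - 2).toNat : ℕ) : ℝ) := by exact_mod_cast hcard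
        _ = (⌊g (m:ℝ) + 3/4⌋ : ℝ) - 1 := by exact_mod_cast h2
    have key2 : ∀ i : ℕ, i < p →
        u (K - i) ≤ ∑ m ∈ Finset.Icc (0:ℤ) (M₀-1), (if (m:ℝ) ≤ u (K - i) then (1:ℝ) else 0) := by
      intro i hip
      set w := u (K - (i:ℤ)) with hw
      have hk2 : (2:ℤ) ≤ K - i := by omega
      have hkK : K - (i:ℤ) ≤ K := by omega
      have hwI := huI _ (by omega) hkK
      have hwu1 : w < u 1 := hu_anti 1 (K - i) le_rfl (by omega) hkK
      have hwM : w < (M₀:ℝ) := lt_of_lt_of_le hwu1 (huI 1 le_rfl hK1).2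
      have hw0 : 0 ≤ w := hwI.1
      have hfw0 : 0 ≤ ⌊w⌋ := Int.floor_nonneg.mpr hw0
      have hfwM : ⌊w⌋ ≤ M₀ - 1 := by
        have h7 : (⌊w⌋:ℝ) < (M₀:ℝ) := lt_of_le_of_lt (Int.floor_le w) hwM
        have : ⌊w⌋ < M₀ := by exact_mod_cast h7
        omega
      have hsub : Finset.Icc (0:ℤ) ⌊w⌋ ⊆ Finset.Icc (0:ℤ) (M₀-1) :=
        Finset.Icc_subset_Icc le_rfl hfwM
      have hstep : ∑ m ∈ Finset.Icc (0:ℤ) ⌊w⌋, (if (m:ℝ) ≤ w then (1:ℝ) else 0)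
          ≤ ∑ m ∈ Finset.Icc (0:ℤ) (M₀-1), (if (m:ℝ) ≤ w then (1:ℝ) else 0) := by
        apply Finset.sum_le_sum_of_subset_of_nonneg hsub
        intro m _ _
        positivity
      have heval : ∑ m ∈ Finset.Icc (0:ℤ) ⌊w⌋, (if (m:ℝ) ≤ w then (1:ℝ) else 0)
          = ((⌊w⌋ + 1 : ℤ) : ℝ) := by
        have hone : ∀ m ∈ Finset.Icc (0:ℤ) ⌊w⌋, (if (m:ℝ) ≤ w then (1:ℝ) else 0) = 1 := by
          intro m hm
          rw [Finset.mem_Icc] at hm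
          rw [if_pos]
          calc (m:ℝ) ≤ (⌊w⌋:ℝ) := by exact_mod_cast hm.2
            _ ≤ w := Int.floor_le w
        rw [Finset.sum_congr rfl hone, Finset.sum_const, Int.card_Icc, nsmul_eq_mul, mul_one]
        have h9 : (⌊w⌋ + 1 - 0).toNat = (⌊w⌋ + 1).toNat := by omega
        rw [h9]
        rw [show (((⌊w⌋ + 1).toNat : ℕ) : ℝ) = (((⌊w⌋ + 1).toNat : ℤ) : ℝ) by push_cast; ring,
          Int.toNat_of_nonneg (by omega)]
      have hwle : w ≤ ((⌊w⌋ + 1 : ℤ) : ℝ) := by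
        push_cast
        linarith [Int.lt_floor_add_one w]
      linarith [hstep, heval.ge, heval.le, hwle]
    have hswap : ∑ i ∈ Finset.range p, (∑ m ∈ Finset.Icc (0:ℤ) (M₀-1),
          (if (m:ℝ) ≤ u (K - i) then (1:ℝ) else 0))
        = ∑ m ∈ Finset.Icc (0:ℤ) (M₀-1), (∑ i ∈ Finset.range p,
          (if (m:ℝ) ≤ u (K - i) then (1:ℝ) else 0)) := Finset.sum_comm
    have hS2 : ∑ i ∈ Finset.range p, u (K - i)
        ≤ ∑ m ∈ Finset.Icc (0:ℤ) (M₀-1), ((⌊g (m:ℝ) + 3/4⌋ : ℝ) - 1) := by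
      calc ∑ i ∈ Finset.range p, u (K - i)
          ≤ ∑ i ∈ Finset.range p, (∑ m ∈ Finset.Icc (0:ℤ) (M₀-1),
              (if (m:ℝ) ≤ u (K - i) then (1:ℝ) else 0)) :=
            Finset.sum_le_sum (fun i hi => key2 i (Finset.mem_range.mp hi))
        _ = _ := hswap
        _ ≤ _ := by
            apply Finset.sum_le_sum
            intro m hm
            rw [Finset.mem_Icc] at hm
            exact key1 m hm.1 hm.2
    have hcardM : ∑ m ∈ Finset.Icc (0:ℤ) (M₀-1), (1:ℝ) = (M₀:ℝ) := by
      rw [Finset.sum_const, Int.card_Icc, nsmul_eq_mul, mul_one]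
      have h9 : (M₀ - 1 + 1 - 0).toNat = M₀.toNat := by omega
      rw [h9, show ((M₀.toNat : ℕ) : ℝ) = ((M₀.toNat : ℤ) : ℝ) by push_cast; ring,
        Int.toNat_of_nonneg (by omega)]
    have hdist := Finset.sum_sub_distrib (s := Finset.Icc (0:ℤ) (M₀-1))
      (f := fun m : ℤ => (⌊g (m:ℝ) + 3/4⌋ : ℝ)) (g := fun _ => (1:ℝ))
    rw [hcardM] at hdist
    linarith [hS2, hdist.le, hdist.ge]
  -- PART 3: final assembly
  have hu1M : u 1 ≤ (M₀:ℝ) := (huI 1 le_rfl hK1).2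
  have hu10 : 0 ≤ u 1 := (huI 1 le_rfl hK1).1
  have hTail : (∫ z in (M₀:ℝ)..b, g z) ≤ (b - (M₀:ℝ)) / 8 := by
    have htr := trap_bound hconv hcont hM₀0R hM₀b le_rfl
    rw [hgb] at htr
    nlinarith [htr, hgM₀, hgM₀0, hM₀b]
  have hIntSplit : (∫ z in (0:ℝ)..b, g z)
      = (∫ z in (0:ℝ)..(M₀:ℝ), g z) + (∫ z in (M₀:ℝ)..b, g z) :=
    (intervalIntegral.integral_add_adjacent_intervals (hInt 0 M₀ h0b hMb)
      (hInt M₀ b hMb hbb)).symm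
  have hSubsetSum : ∑ m ∈ Finset.Icc (0:ℤ) (M₀-1), (⌊g (m:ℝ) + 3/4⌋ : ℝ)
      ≤ ∑ m ∈ Finset.Icc (0:ℤ) ⌊b⌋, (⌊g (m:ℝ) + 3/4⌋ : ℝ) := by
    apply Finset.sum_le_sum_of_subset_of_nonneg
      (Finset.Icc_subset_Icc le_rfl (by omega))
    intro m hm _
    rw [Finset.mem_Icc] at hm
    have hmem : (m:ℝ) ∈ Set.Icc (0:ℝ) b := by
      constructor
      · exact_mod_cast hm.1
      · have : ((m:ℝ)) ≤ ((⌊b⌋:ℝ)) := by exact_mod_cast hm.2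
        linarith
    have := hnonneg _ hmem
    have h8 : (0:ℤ) ≤ ⌊g (m:ℝ) + 3/4⌋ := by
      rw [Int.le_floor]; push_cast; linarith
    exact_mod_cast h8
  rw [hIntSplit]
  linarith [hIntBound, hCount, hTail, hSubsetSum, hu1M]
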